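/- Let m be a finite-dimensional real vector space with a commutative associative bilinear product ⋆, and suppose the left-multiplication operator α_u : v ↦ u⋆v has trace zero for every power, i.e., tr(α_u^n) = 0 for all u ∈ m and all n ≥ 1. Then there exists a nonzero u₀ ∈ m with u₀ ⋆ v = 0 for all v ∈ m, provided m ≠ 0. -/

import Mathlib

open Module Set Finset

section NilpC

variable {V : Type*} [AddCommGroup V] [Module ℂ V] [FiniteDimensional ℂ V]

lemma aux_trace_restrict_pow (f : Module.End ℂ V) (μ : ℂ) (k : ℕ) :
    LinearMap.trace ℂ _ ((f.restrict (f.mapsTo_maxGenEigenspace_of_comm rfl μ)) ^ k)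
      = μ ^ k * (finrank ℂ (f.maxGenEigenspace μ) : ℂ) := by
  set g := f.restrict (f.mapsTo_maxGenEigenspace_of_comm rfl μ) with hg
  set c : Module.End ℂ (f.maxGenEigenspace μ) := algebraMap ℂ _ μ with hc
  have hnil : IsNilpotent (g - c) := f.isNilpotent_restrict_maxGenEigenspace_sub_algebraMap μ
  have hcomm : Commute g c := (Algebra.commutes μ g).symm
  have key : IsNilpotent (g ^ k - c ^ k) := by
    rw [← hcomm.geom_sum₂_mul k]
    refine Commute.isNilpotent_mul_left ?_ hnil
    refine Commute.sub_right ?_ ?_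
    · exact Commute.sum_left _ _ _ fun i _ =>
        ((Commute.refl g).pow_left i).mul_left (hcomm.symm.pow_left _)
    · exact Commute.sum_left _ _ _ fun i _ =>
        (hcomm.pow_left i).mul_left ((Commute.refl c).pow_left _)
  have tr0 : LinearMap.trace ℂ _ (g ^ k - c ^ k) = 0 :=
    (LinearMap.isNilpotent_trace_of_isNilpotent key).eq_zero
  have hck : c ^ k = algebraMap ℂ _ (μ ^ k) := (map_pow _ _ _).symm
  have : LinearMap.trace ℂ _ (g ^ k) = LinearMap.trace ℂ _ (c ^ k) := by
    have h2 : LinearMap.trace ℂ _ (g ^ k) - LinearMap.trace ℂ _ (c ^ k) = 0 := by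
      rw [← map_sub]; exact tr0
    exact sub_eq_zero.mp h2
  rw [this, hck, Module.algebraMap_end_eq_smul_id, map_smul, LinearMap.trace_id, smul_eq_mul]

lemma aux_isNilpotent_of_trace_pow (f : Module.End ℂ V)
    (h : ∀ n : ℕ, 1 ≤ n → LinearMap.trace ℂ V (f ^ n) = 0) : IsNilpotent f := by
  classical
  set E := f.maxGenEigenspace with hE
  have hds := DirectSum.isInternal_submodule_of_iSupIndep_of_iSup_eq_top
      f.independent_maxGenEigenspace f.iSup_maxGenEigenspace_eq_top
  have h_fin : {μ | E μ ≠ ⊥}.Finite :=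
    WellFoundedGT.finite_ne_bot_of_iSupIndep f.independent_maxGenEigenspace
  have hmap : ∀ (k : ℕ) (μ : ℂ), MapsTo (f ^ k) (E μ) (E μ) := fun k μ =>
    f.mapsTo_maxGenEigenspace_of_comm ((Commute.refl f).pow_right k) μ
  have key : ∀ k : ℕ, 1 ≤ k → ∑ μ ∈ h_fin.toFinset, μ ^ k * (finrank ℂ (E μ) : ℂ) = 0 := by
    intro k hk
    rw [← h k hk, LinearMap.trace_eq_sum_trace_restrict' hds h_fin (hmap k)]
    refine (Finset.sum_congr rfl fun μ _ => ?_).symm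
    rw [← aux_trace_restrict_pow f μ k]
    exact congrArg _ (Module.End.pow_restrict k _ (hmap k μ)).symm
  have hzero : ∀ μ : ℂ, μ ≠ 0 → E μ = ⊥ := by
    by_contra hcon
    push_neg at hcon
    obtain ⟨μ₀, hμ₀, hEμ₀⟩ := hcon
    set t : Finset ℂ := h_fin.toFinset.erase 0 with ht
    have hμ₀t : μ₀ ∈ t := by
      rw [ht, Finset.mem_erase]
      exact ⟨hμ₀, by simpa using hEμ₀⟩
    have e := t.equivFin
    set v : Fin t.card → ℂ := fun i => (e.symm i : ℂ) with hv
    have hvinj : Function.Injective v := by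
      intro i j hij
      have := Subtype.ext hij
      exact e.symm.injective this
    have hvt : ∀ i, v i ∈ t := fun i => (e.symm i).2
    have hvne : ∀ i, v i ≠ 0 := fun i => Finset.ne_of_mem_erase (hvt i)
    set d : Fin t.card → ℂ := fun i => (finrank ℂ (E (v i)) : ℂ) * v i with hd
    have hsum : ∀ i : Fin t.card, ∑ j, d j * v j ^ (i : ℕ) = 0 := by
      intro i
      have hterm : ∀ j, d j * v j ^ (i : ℕ) = v j ^ ((i : ℕ) + 1) * (finrank ℂ (E (v j)) : ℂ) := by
        intro j; rw [hd]; ring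
      calc ∑ j, d j * v j ^ (i : ℕ)
          = ∑ j, v j ^ ((i : ℕ) + 1) * (finrank ℂ (E (v j)) : ℂ) :=
            Finset.sum_congr rfl fun j _ => hterm j
        _ = ∑ x : {x // x ∈ t}, ((x : ℂ) ^ ((i : ℕ) + 1) * (finrank ℂ (E (x : ℂ)) : ℂ)) :=
            Equiv.sum_comp e.symm (fun x : {x // x ∈ t} =>
              (x : ℂ) ^ ((i : ℕ) + 1) * (finrank ℂ (E (x : ℂ)) : ℂ))
        _ = ∑ μ ∈ t, μ ^ ((i : ℕ) + 1) * (finrank ℂ (E μ) : ℂ) :=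
            Finset.sum_coe_sort t (fun μ : ℂ => μ ^ ((i : ℕ) + 1) * (finrank ℂ (E μ) : ℂ))
        _ = ∑ μ ∈ h_fin.toFinset, μ ^ ((i : ℕ) + 1) * (finrank ℂ (E μ) : ℂ) := by
            apply Finset.sum_erase
            simp
        _ = 0 := key _ (Nat.le_add_left 1 i)
    have hd0 : d = 0 := Matrix.eq_zero_of_forall_pow_sum_mul_pow_eq_zero hvinj hsum
    have hi₀ : v (e ⟨μ₀, hμ₀t⟩) = μ₀ := by rw [hv]; simp
    have := congrFun hd0 (e ⟨μ₀, hμ₀t⟩)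
    rw [hd] at this
    simp only [Pi.zero_apply, mul_eq_zero] at this
    rcases this with h1 | h2
    · rw [hi₀] at h1
      rw [Nat.cast_eq_zero] at h1
      exact hEμ₀ (Submodule.finrank_eq_zero.mp h1)
    · rw [hi₀] at h2; exact hμ₀ h2
  have hE0 : E 0 = ⊤ := by
    have hle : ∀ μ, E μ ≤ E 0 := by
      intro μ
      rcases eq_or_ne μ 0 with rfl | hμ
      · exact le_rfl
      · rw [hzero μ hμ]; exact bot_le
    have := f.iSup_maxGenEigenspace_eq_top
    rw [eq_top_iff, ← this]
    exact iSup_le hle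
  have hker : ∀ x : V, ∃ n : ℕ, (f ^ n) x = 0 := by
    intro x
    have hx : x ∈ E 0 := hE0 ▸ Submodule.mem_top
    rw [hE, Module.End.mem_maxGenEigenspace] at hx
    obtain ⟨n, hn⟩ := hx
    exact ⟨n, by simpa using hn⟩
  exact (LinearMap.charpoly_nilpotent_tfae f).out 2 0 |>.mp hker

end NilpC

section NilpR

variable {W : Type*} [AddCommGroup W] [Module ℝ W] [FiniteDimensional ℝ W]

lemma aux_isNilpotent_real (f : Module.End ℝ W)
    (h : ∀ n : ℕ, 1 ≤ n → LinearMap.trace ℝ W (f ^ n) = 0) : IsNilpotent f := by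
  classical
  set b := finBasis ℝ W with hb
  set A := LinearMap.toMatrixAlgEquiv b f with hA
  set φ := (algebraMap ℝ ℂ).mapMatrix (m := Fin (finrank ℝ W)) with hφ
  set g := Matrix.toLinAlgEquiv' (φ A) with hgdef
  have htrg : ∀ n : ℕ, 1 ≤ n → LinearMap.trace ℂ _ (g ^ n) = 0 := by
    intro n hn
    rw [hgdef, ← map_pow, LinearMap.trace_eq_matrix_trace ℂ (Pi.basisFun ℂ _),
      LinearMap.toMatrix_eq_toMatrix']
    have : LinearMap.toMatrix' (Matrix.toLinAlgEquiv' (φ A ^ n)) = φ A ^ n := by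
      exact LinearMap.toMatrixAlgEquiv'_toLinAlgEquiv' _
    rw [this, ← map_pow]
    have hAtr : (A ^ n).trace = LinearMap.trace ℝ W (f ^ n) := by
      rw [hA, ← map_pow, LinearMap.trace_eq_matrix_trace ℝ b]
      rfl
    have : (φ (A ^ n)).trace = algebraMap ℝ ℂ ((A ^ n).trace) := by
      rw [hφ]
      simp [Matrix.trace, Matrix.diag, map_sum]
    rw [this, hAtr, h n hn, map_zero]
  have hgnil : IsNilpotent g := aux_isNilpotent_of_trace_pow g htrg
  have hφAnil : IsNilpotent (φ A) := by
    obtain ⟨n, hn⟩ := hgnil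
    refine ⟨n, ?_⟩
    have : Matrix.toLinAlgEquiv' (φ A ^ n) = 0 := by rw [map_pow, ← hgdef, hn]
    have := congrArg Matrix.toLinAlgEquiv'.symm this
    simpa using this
  have hAnil : IsNilpotent A := by
    obtain ⟨n, hn⟩ := hφAnil
    refine ⟨n, ?_⟩
    rw [← map_pow] at hn
    ext i j
    have := congrFun (congrFun (congrArg Matrix.of.symm hn) i) j
    have h2 : algebraMap ℝ ℂ ((A ^ n) i j) = 0 := by
      simpa [hφ, Matrix.map_apply] using congrFun (congrFun hn i) j
    exact (algebraMap ℝ ℂ).injective (by simpa using h2)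
  obtain ⟨n, hn⟩ := hAnil
  refine ⟨n, ?_⟩
  have : LinearMap.toMatrixAlgEquiv b (f ^ n) = 0 := by rw [map_pow, ← hA, hn]
  have := congrArg (LinearMap.toMatrixAlgEquiv b).symm this
  simpa using this

end NilpR

universe u v

lemma aux_common_ker (d : ℕ) : ∀ {V : Type u} [AddCommGroup V] [Module ℝ V]
    [FiniteDimensional ℝ V] [Nontrivial V], finrank ℝ V ≤ d →
    ∀ {ι : Type v} (F : ι → Module.End ℝ V),
    (∀ i j, Commute (F i) (F j)) → (∀ i, IsNilpotent (F i)) →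
    ∃ x : V, x ≠ 0 ∧ ∀ i, F i x = 0 := by
  induction d with
  | zero =>
    intro V _ _ _ _ hle
    exact absurd hle (by have := Module.finrank_pos (R := ℝ) (M := V); omega)
  | succ d ih =>
    intro V _ _ _ _ hle ι F hcomm hnil
    by_cases hz : ∀ i, F i = 0
    · obtain ⟨x, hx⟩ := exists_ne (0 : V)
      exact ⟨x, hx, fun i => by rw [hz i]; rfl⟩
    · push_neg at hz
      obtain ⟨i₀, hi₀⟩ := hz
      set K := LinearMap.ker (F i₀) with hK
      have hKne : K ≠ ⊥ := by
        obtain ⟨x0, hx0⟩ := exists_ne (0 : V)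
        obtain ⟨n, hn⟩ := hnil i₀
        have hex : ∃ k, (F i₀ ^ k) x0 = 0 := ⟨n, by rw [hn]; rfl⟩
        classical
        set k := Nat.find hex with hkdef
        have hk : (F i₀ ^ k) x0 = 0 := Nat.find_spec hex
        have hkpos : k ≠ 0 := by
          intro h0
          rw [h0, pow_zero] at hk
          exact hx0 hk
        have hy : (F i₀ ^ (k - 1)) x0 ≠ 0 :=
          Nat.find_min hex (Nat.sub_lt (Nat.pos_of_ne_zero hkpos) one_pos)
        intro hbot
        apply hy
        have hmem : (F i₀ ^ (k - 1)) x0 ∈ K := by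
          rw [hK, LinearMap.mem_ker, ← Module.End.mul_apply, ← pow_succ']
          rwa [Nat.sub_add_cancel (Nat.one_le_iff_ne_zero.mpr hkpos)]
        rw [hbot] at hmem
        simpa using hmem
      have hKtop : K ≠ ⊤ := by
        intro htop
        apply hi₀
        ext x
        have hx : x ∈ K := htop ▸ Submodule.mem_top
        rw [hK] at hx
        simpa using LinearMap.mem_ker.mp hx
      have hlt : finrank ℝ K < finrank ℝ V := Submodule.finrank_lt hKtop
      have hKnt : Nontrivial K := Submodule.nontrivial_iff_ne_bot.mpr hKne
      have hmapsTo : ∀ i, Set.MapsTo (F i) K K := by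
        intro i x hx
        have hx' : F i₀ x = 0 := LinearMap.mem_ker.mp hx
        have : F i₀ (F i x) = F i (F i₀ x) := by
          have := (hcomm i₀ i).symm
          calc F i₀ (F i x) = (F i₀ * F i) x := rfl
            _ = (F i * F i₀) x := by rw [this]
            _ = F i (F i₀ x) := rfl
        rw [hK]
        simp only [SetLike.mem_coe, LinearMap.mem_ker]
        rw [this, hx', map_zero]
      set G : ι → Module.End ℝ K := fun i => (F i).restrict (hmapsTo i) with hG
      have hGcomm : ∀ i j, Commute (G i) (G j) := fun i j =>
        LinearMap.restrict_commute (hcomm i j) _ _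
      have hGnil : ∀ i, IsNilpotent (G i) := fun i =>
        Module.End.isNilpotent.restrict (hmapsTo i) (hnil i)
      obtain ⟨y, hy0, hy⟩ := ih (by omega) G hGcomm hGnil
      refine ⟨(y : V), by simpa using hy0, fun i => ?_⟩
      have := hy i
      rw [hG] at this
      have h2 := congrArg (Subtype.val) this
      exact h2

/-- In a nonzero finite-dimensional commutative associative real algebra,
if every power of every left-multiplication operator has trace zero, then there is a
nonzero element annihilating the algebra. -/
theorem stmt_2 (m : Type*) [AddCommGroup m] [Module ℝ m] [FiniteDimensional ℝ m]
    [Nontrivial m]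
    (mul : m →ₗ[ℝ] m →ₗ[ℝ] m)
    (hcomm : ∀ u v : m, mul u v = mul v u)
    (hassoc : ∀ u v w : m, mul (mul u v) w = mul u (mul v w))
    (htr : ∀ u : m, ∀ n : ℕ, 1 ≤ n → LinearMap.trace ℝ m ((mul u) ^ n) = 0) :
    ∃ u₀ : m, u₀ ≠ 0 ∧ ∀ v : m, mul u₀ v = 0 := by
  have hmulmul : ∀ u v : m, mul u * mul v = mul (mul u v) := by
    intro u v
    ext w
    simp only [Module.End.mul_apply]
    exact (hassoc u v w).symm
  have hc : ∀ u v : m, Commute (mul u) (mul v) := by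
    intro u v
    show mul u * mul v = mul v * mul u
    rw [hmulmul, hmulmul, hcomm u v]
  have hn : ∀ u : m, IsNilpotent (mul u) := fun u => aux_isNilpotent_real (mul u) (htr u)
  obtain ⟨x, hx0, hx⟩ := aux_common_ker (finrank ℝ m) le_rfl (fun u : m => mul u) hc hn
  exact ⟨x, hx0, fun v => by rw [hcomm x v]; exact hx v⟩
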